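/- arXiv:2110.12071 — 2 statements merged into one kernel-verified Lean document; each statement's English description precedes it below -/
import Mathlib

section
/- For any real β and nonnegative integer d, the tail sum of modified Bessel functions satisfies ∑_{j=d+1}^∞ I_j(β) = ∑_{j=d+1}^∞ (β/2)^j/j! · ∑_{k=0}^{⌊(j-d-1)/2⌋} C(j,k), where C(j,k) is the binomial coefficient. -/
/-- The modified Bessel function of the first kind, of integer order `j ≥ 0`:
`I_j(β) = ∑_{m=0}^∞ C(2m+j, m) (β/2)^{2m+j}/(2m+j)!`. -/
noncomputable def besselI (j : ℕ) (β : ℝ) : ℝ :=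
  ∑' m : ℕ, (Nat.choose (2 * m + j) m : ℝ) * (β / 2) ^ (2 * m + j) / Nat.factorial (2 * m + j)

private lemma choose_le_two_pow' (n k : ℕ) : Nat.choose n k ≤ 2 ^ n := by
  rcases le_or_gt k n with h | h
  · calc Nat.choose n k ≤ ∑ m ∈ Finset.range (n + 1), n.choose m :=
        Finset.single_le_sum (fun i _ => Nat.zero_le _) (Finset.mem_range.2 (by omega))
      _ = 2 ^ n := Nat.sum_range_choose n
  · rw [Nat.choose_eq_zero_of_lt h]; positivity

private lemma aux_summable (β : ℝ) (d : ℕ) :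
    Summable (fun p : ℕ × ℕ =>
      (Nat.choose (2 * p.2 + (d + 1 + p.1)) p.2 : ℝ) * (β / 2) ^ (2 * p.2 + (d + 1 + p.1)) /
        Nat.factorial (2 * p.2 + (d + 1 + p.1))) := by
  have h2 : Function.Injective (fun k : ℕ => 2 * k) := fun a b h => by
    simp only at h; omega
  have hv : Summable (fun k : ℕ => |β| ^ (2 * k) / Nat.factorial (2 * k)) :=
    (Real.summable_pow_div_factorial |β|).comp_injective h2
  have hu : Summable (fun m : ℕ => |β| ^ m / Nat.factorial m) :=
    Real.summable_pow_div_factorial |β|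
  have hbase : Summable (fun p : ℕ × ℕ =>
      |β| ^ (d + 1) * (|β| ^ p.1 / Nat.factorial p.1 * (|β| ^ (2 * p.2) / Nat.factorial (2 * p.2)))) :=
    (hu.mul_of_nonneg hv (fun m => by positivity) (fun k => by positivity)).mul_left _
  apply Summable.of_norm_bounded hbase
  rintro ⟨m, k⟩
  simp only
  set n := 2 * k + (d + 1 + m) with hn
  have hcle : (Nat.choose n k : ℝ) ≤ 2 ^ n := by
    exact_mod_cast choose_le_two_pow' n k
  have hfle : (Nat.factorial m * Nat.factorial (2 * k) : ℝ) ≤ Nat.factorial n := by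
    have h1 : Nat.factorial m * Nat.factorial (2 * k) ∣ Nat.factorial (m + 2 * k) :=
      Nat.factorial_mul_factorial_dvd_factorial_add m (2 * k)
    have h2 : Nat.factorial (m + 2 * k) ≤ Nat.factorial n :=
      Nat.factorial_le (by omega)
    exact_mod_cast le_trans (Nat.le_of_dvd (Nat.factorial_pos _) h1) h2
  have hnorm : ‖(Nat.choose n k : ℝ) * (β / 2) ^ n / Nat.factorial n‖
      = (Nat.choose n k : ℝ) * (|β| / 2) ^ n / Nat.factorial n := by
    rw [Real.norm_eq_abs, abs_div, abs_mul, abs_pow, abs_div, Nat.abs_cast, Nat.abs_cast, abs_two]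
  rw [hnorm]
  calc (Nat.choose n k : ℝ) * (|β| / 2) ^ n / Nat.factorial n
      ≤ 2 ^ n * (|β| / 2) ^ n / Nat.factorial n := by
        gcongr
    _ = |β| ^ n / Nat.factorial n := by
        rw [← mul_pow, show 2 * (|β| / 2) = |β| by ring]
    _ ≤ |β| ^ n / (Nat.factorial m * Nat.factorial (2 * k)) := by
        gcongr
    _ = |β| ^ (d + 1) * (|β| ^ m / Nat.factorial m * (|β| ^ (2 * k) / Nat.factorial (2 * k))) := by
        rw [hn]
        rw [show 2 * k + (d + 1 + m) = (d + 1) + m + 2 * k by ring, pow_add, pow_add]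
        field_simp

/-- Tail sum identity for modified Bessel functions:
`∑_{j=d+1}^∞ I_j(β) = ∑_{j=d+1}^∞ (β/2)^j/j! · ∑_{k=0}^{⌊(j-d-1)/2⌋} C(j,k)`. -/
theorem bessel_tail_sum (β : ℝ) (d : ℕ) :
    (∑' m : ℕ, besselI (d + 1 + m) β)
      = ∑' m : ℕ, (β / 2) ^ (d + 1 + m) / Nat.factorial (d + 1 + m) *
          ∑ k ∈ Finset.range (m / 2 + 1), (Nat.choose (d + 1 + m) k : ℝ) := by
  set F : ℕ × ℕ → ℝ := fun p =>
    (Nat.choose (2 * p.2 + (d + 1 + p.1)) p.2 : ℝ) * (β / 2) ^ (2 * p.2 + (d + 1 + p.1)) /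
      Nat.factorial (2 * p.2 + (d + 1 + p.1)) with hF
  set G : ℕ × ℕ → ℝ := fun p =>
    if 2 * p.2 ≤ p.1 then
      (Nat.choose (d + 1 + p.1) p.2 : ℝ) * (β / 2) ^ (d + 1 + p.1) / Nat.factorial (d + 1 + p.1)
    else 0 with hG
  have hFsum : Summable F := aux_summable β d
  have hGF : ∀ m k : ℕ, G (m + 2 * k, k) = F (m, k) := by
    intro m k
    simp only [hG, hF]
    rw [if_pos (by omega), show d + 1 + (m + 2 * k) = 2 * k + (d + 1 + m) by omega]
  have hinj : Function.Injective (fun p : ℕ × ℕ => (p.1 + 2 * p.2, p.2)) := by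
    rintro ⟨a, b⟩ ⟨c, e⟩ h
    simp only [Prod.mk.injEq] at h
    obtain ⟨h1, h2⟩ := h
    subst h2
    simp at h1 ⊢
    omega
  have hzero : ∀ p : ℕ × ℕ, p ∉ Set.range (fun p : ℕ × ℕ => (p.1 + 2 * p.2, p.2)) → G p = 0 := by
    rintro ⟨n, k⟩ h
    simp only [hG]
    rw [if_neg]
    intro hle
    exact h ⟨(n - 2 * k, k), by simp; omega⟩
  have hGsum : Summable G := by
    rw [← hinj.summable_iff hzero]
    have : G ∘ (fun p : ℕ × ℕ => (p.1 + 2 * p.2, p.2)) = F := by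
      funext p
      exact hGF p.1 p.2
    rwa [this]
  have step1 : (∑' m : ℕ, besselI (d + 1 + m) β) = ∑' p : ℕ × ℕ, F p := by
    rw [Summable.tsum_prod' hFsum hFsum.prod_factor]
    rfl
  have step2 : (∑' p : ℕ × ℕ, G p) = ∑' p : ℕ × ℕ, F p := by
    apply tsum_eq_tsum_of_ne_zero_bij
      (fun x : Function.support F => (x.1.1 + 2 * x.1.2, x.1.2))
    · rintro ⟨a, ha⟩ ⟨b, hb⟩ h
      exact Subtype.ext (hinj h)
    · rintro ⟨n, k⟩ hnk
      have h2k : 2 * k ≤ n := by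
        by_contra h
        exact hnk (by simp only [hG]; rw [if_neg h])
      refine ⟨⟨(n - 2 * k, k), ?_⟩, by simp; omega⟩
      have : F (n - 2 * k, k) = G (n, k) := by
        rw [← hGF (n - 2 * k) k]
        congr 2
        omega
      simpa [Function.mem_support, this] using hnk
    · rintro ⟨⟨m, k⟩, h⟩
      exact hGF m k
  rw [step1, ← step2, Summable.tsum_prod' hGsum hGsum.prod_factor]
  apply tsum_congr
  intro n
  have : (∑' k : ℕ, G (n, k)) = ∑ k ∈ Finset.range (n / 2 + 1), G (n, k) := by
    apply tsum_eq_sum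
    intro k hk
    simp only [Finset.mem_range] at hk
    simp only [hG]
    rw [if_neg (by omega)]
  rw [this, Finset.mul_sum]
  apply Finset.sum_congr rfl
  intro k hk
  simp only [Finset.mem_range] at hk
  simp only [hG]
  rw [if_pos (by omega)]
  ring
end

section
/- Let Ĥ be a Hermitian operator with ‖Ĥ‖ ≤ 1 and x ∈ ℝ. Then for every even nonnegative integer n, the operator A_n = (iĤ)^n (I + i·(x/(n+1))·Ĥ)/√(1+(x/(n+1))²) has operator norm at most 1, and e^{iĤx} = ∑_{n even} α_n A_n with α_n = (x^n/n!)·√(1+(x/(n+1))²), where the sum over even n ≥ 0 converges absolutely. -/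
set_option maxHeartbeats 1000000 in
/-- For a Hermitian operator `Ĥ` with `‖Ĥ‖ ≤ 1` and `x ∈ ℝ`, each even-order operator
`A_n = (iĤ)^n (I + i(x/(n+1))Ĥ)/√(1+(x/(n+1))²)` has norm at most `1`, and
`e^{iĤx} = ∑_{n even} α_n A_n` with `α_n = (xⁿ/n!)√(1+(x/(n+1))²)`, the series over
even `n` converging absolutely. -/
theorem exp_even_lcu_expansion
    {A : Type*} [NormedRing A] [StarRing A] [CStarRing A] [NormedAlgebra ℂ A]
    [CompleteSpace A] [StarModule ℂ A]
    (H : A) (hH : star H = H) (hHnorm : ‖H‖ ≤ 1) (x : ℝ) :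
    (∀ m : ℕ,
      ‖(((Real.sqrt (1 + (x / (2 * m + 1)) ^ 2))⁻¹ : ℝ) : ℂ) •
          ((Complex.I • H) ^ (2 * m) *
            ((1 : A) + (Complex.I * ((x / (2 * m + 1) : ℝ) : ℂ)) • H))‖ ≤ 1) ∧
    Summable (fun m : ℕ =>
      x ^ (2 * m) / Nat.factorial (2 * m) * Real.sqrt (1 + (x / (2 * m + 1)) ^ 2)) ∧
    HasSum (fun m : ℕ =>
        ((x ^ (2 * m) / Nat.factorial (2 * m) *
            Real.sqrt (1 + (x / (2 * m + 1)) ^ 2) : ℝ) : ℂ) •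
          ((((Real.sqrt (1 + (x / (2 * m + 1)) ^ 2))⁻¹ : ℝ) : ℂ) •
            ((Complex.I • H) ^ (2 * m) *
              ((1 : A) + (Complex.I * ((x / (2 * m + 1) : ℝ) : ℂ)) • H))))
      (NormedSpace.exp ((Complex.I * x) • H)) := by
  have hone : ‖(1 : A)‖ ≤ 1 := by
    have h := CStarRing.norm_star_mul_self (x := (1 : A))
    simp only [star_one, one_mul] at h
    nlinarith [norm_nonneg (1 : A)]
  have hHH : ‖H * H‖ ≤ 1 := le_trans (norm_mul_le _ _) (by nlinarith [norm_nonneg H])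
  -- norm bound on the C factor
  have hC : ∀ t : ℝ, ‖(1 : A) + (Complex.I * (t : ℂ)) • H‖ ≤ Real.sqrt (1 + t ^ 2) := by
    intro t
    set C := (1 : A) + (Complex.I * (t : ℂ)) • H with hCdef
    have hstar : star C = (1 : A) - (Complex.I * (t : ℂ)) • H := by
      have : star (Complex.I * (t : ℂ)) = -(Complex.I * (t : ℂ)) := by
        simp [Complex.ext_iff]
      rw [hCdef]
      rw [star_add, star_one, star_smul, this, hH, neg_smul, sub_eq_add_neg]
    have hmul : (Complex.I * (t : ℂ)) * (Complex.I * (t : ℂ)) = -((t : ℂ) ^ 2) := by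
      rw [mul_mul_mul_comm, Complex.I_mul_I]; ring
    have hb : ((Complex.I * (t : ℂ)) • H) * ((Complex.I * (t : ℂ)) • H)
        = (-((t : ℂ) ^ 2)) • (H * H) := by
      rw [smul_mul_assoc, mul_smul_comm, smul_smul, hmul]
    have hsq : star C * C = (1 : A) + ((t : ℂ) ^ 2) • (H * H) := by
      rw [hstar, hCdef]
      have hring : ((1 : A) - (Complex.I * (t : ℂ)) • H) * ((1 : A) + (Complex.I * (t : ℂ)) • H)
          = 1 - ((Complex.I * (t : ℂ)) • H) * ((Complex.I * (t : ℂ)) • H) := by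
        simp only [sub_mul, mul_add, one_mul, mul_one]
        abel
      rw [hring, hb, neg_smul, sub_neg_eq_add]
    have hnsq : ‖C‖ ^ 2 ≤ 1 + t ^ 2 := by
      have h1 : ‖C‖ * ‖C‖ = ‖star C * C‖ := (CStarRing.norm_star_mul_self).symm
      rw [hsq] at h1
      have h2 : ‖(1 : A) + ((t : ℂ) ^ 2) • (H * H)‖ ≤ 1 + t ^ 2 := by
        refine (norm_add_le _ _).trans ?_
        have h3 : ‖((t : ℂ) ^ 2) • (H * H)‖ ≤ t ^ 2 := by
          rw [norm_smul]
          have h4 : ‖((t : ℂ) ^ 2)‖ = t ^ 2 := by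
            rw [← Complex.ofReal_pow, Complex.norm_real,
              Real.norm_eq_abs, abs_of_nonneg (sq_nonneg t)]
          rw [h4]
          nlinarith [sq_nonneg t]
        linarith
      nlinarith [norm_nonneg C]
    have := Real.sqrt_le_sqrt hnsq
    rwa [Real.sqrt_sq (norm_nonneg C)] at this
  have hsqrt_pos : ∀ t : ℝ, 0 < Real.sqrt (1 + t ^ 2) := fun t =>
    Real.sqrt_pos.mpr (by positivity)
  refine ⟨?_, ?_, ?_⟩
  · intro m
    set t := x / (2 * m + 1) with ht
    rw [norm_smul]
    have h1 : ‖(Complex.I • H) ^ (2 * m)‖ ≤ 1 := by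
      rcases Nat.eq_zero_or_pos m with hm | hm
      · simpa [hm] using hone
      · calc ‖(Complex.I • H) ^ (2 * m)‖ ≤ ‖Complex.I • H‖ ^ (2 * m) :=
              norm_pow_le' _ (by omega)
          _ ≤ 1 := by
              rw [norm_smul]; simp only [Complex.norm_I, one_mul]
              exact pow_le_one₀ (norm_nonneg H) hHnorm
    have hinv : ‖(((Real.sqrt (1 + t ^ 2))⁻¹ : ℝ) : ℂ)‖ = (Real.sqrt (1 + t ^ 2))⁻¹ := by
      rw [Complex.norm_real, Real.norm_eq_abs, abs_inv,
        abs_of_nonneg (Real.sqrt_nonneg _)]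
    calc ‖(((Real.sqrt (1 + t ^ 2))⁻¹ : ℝ) : ℂ)‖ *
          ‖(Complex.I • H) ^ (2 * m) * ((1 : A) + (Complex.I * (t : ℂ)) • H)‖
        ≤ (Real.sqrt (1 + t ^ 2))⁻¹ * (1 * Real.sqrt (1 + t ^ 2)) := by
          rw [hinv]
          refine mul_le_mul le_rfl ?_ (norm_nonneg _) (by positivity)
          exact (norm_mul_le _ _).trans
            (mul_le_mul h1 (hC t) (norm_nonneg _) zero_le_one)
        _ = 1 := by
          rw [one_mul, inv_mul_cancel₀ (ne_of_gt (hsqrt_pos t))]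
  · refine Summable.of_nonneg_of_le (f := fun m : ℕ =>
      |x| ^ (2 * m) / Nat.factorial (2 * m) * (1 + |x|)) (fun m => ?_) (fun m => ?_) ?_
    · have h1 : (0:ℝ) ≤ x ^ (2 * m) := (even_two_mul m).pow_nonneg x
      positivity
    · have h1 : x ^ (2 * m) = |x| ^ (2 * m) := by
        rw [← abs_pow, abs_of_nonneg ((even_two_mul m).pow_nonneg x)]
      rw [h1]
      refine mul_le_mul_of_nonneg_left ?_ (by positivity)
      have habs : (x / (2 * m + 1)) ^ 2 ≤ x ^ 2 := by
        rw [div_pow]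
        refine div_le_self (sq_nonneg x) ?_
        nlinarith [Nat.cast_nonneg (α := ℝ) m]
      have h2 : 1 + (x / (2 * m + 1)) ^ 2 ≤ (1 + |x|) ^ 2 := by
        nlinarith [sq_abs x, abs_nonneg x]
      calc Real.sqrt (1 + (x / (2 * m + 1)) ^ 2) ≤ Real.sqrt ((1 + |x|) ^ 2) :=
            Real.sqrt_le_sqrt h2
        _ = 1 + |x| := Real.sqrt_sq (by positivity)
    · apply Summable.mul_right
      have hs := Real.summable_pow_div_factorial |x|
      exact hs.comp_injective (fun a b h => by dsimp at h; omega : Function.Injective (fun m : ℕ => 2 * m))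
  · set f : ℕ → A := fun n => ((n.factorial : ℂ))⁻¹ • ((Complex.I * x) • H) ^ n with hf
    have hexp : HasSum f (NormedSpace.exp ((Complex.I * x) • H)) :=
      NormedSpace.exp_series_hasSum_exp' _
    have hsummable : Summable f := hexp.summable
    have he : Summable fun m => f (2 * m) :=
      hsummable.comp_injective (fun a b h => by omega)
    have ho : Summable fun m => f (2 * m + 1) :=
      hsummable.comp_injective (fun a b h => by omega)
    have hsplit := he.hasSum.even_add_odd ho.hasSum
    have heq : (∑' m, f (2 * m)) + (∑' m, f (2 * m + 1)) =
        NormedSpace.exp ((Complex.I * x) • H) := hsplit.unique hexp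
    have key : HasSum (fun m => f (2 * m) + f (2 * m + 1))
        (NormedSpace.exp ((Complex.I * x) • H)) := heq ▸ he.hasSum.add ho.hasSum
    have hterm : ∀ m : ℕ,
        ((x ^ (2 * m) / Nat.factorial (2 * m) *
            Real.sqrt (1 + (x / (2 * m + 1)) ^ 2) : ℝ) : ℂ) •
          ((((Real.sqrt (1 + (x / (2 * m + 1)) ^ 2))⁻¹ : ℝ) : ℂ) •
            ((Complex.I • H) ^ (2 * m) *
              ((1 : A) + (Complex.I * ((x / (2 * m + 1) : ℝ) : ℂ)) • H)))
        = f (2 * m) + f (2 * m + 1) := by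
      intro m
      set t : ℝ := x / (2 * m + 1) with ht
      set s : ℝ := Real.sqrt (1 + t ^ 2) with hsdef
      have hs0 : s ≠ 0 := ne_of_gt (hsqrt_pos t)
      have hfac : ((2 * m).factorial : ℂ) ≠ 0 := by exact_mod_cast (Nat.factorial_ne_zero _)
      have hm1 : ((2 * (m:ℂ) + 1)) ≠ 0 := by
        intro hcon
        have : (2 * (m:ℝ) + 1) = 0 := by exact_mod_cast congrArg Complex.re hcon
        nlinarith [Nat.cast_nonneg (α := ℝ) m]
      rw [smul_smul]
      have h1 : ((x ^ (2 * m) / Nat.factorial (2 * m) * s : ℝ) : ℂ) * ((s⁻¹ : ℝ) : ℂ)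
          = (x : ℂ) ^ (2 * m) / ((2 * m).factorial : ℂ) := by
        push_cast
        rw [mul_assoc, mul_inv_cancel₀ (Complex.ofReal_ne_zero.mpr hs0), mul_one]
      rw [h1, smul_pow]
      have expand : (Complex.I ^ (2 * m) • H ^ (2 * m)) *
          ((1 : A) + (Complex.I * (t : ℂ)) • H)
          = Complex.I ^ (2 * m) • H ^ (2 * m) +
            (Complex.I ^ (2 * m) * (Complex.I * (t : ℂ))) • H ^ (2 * m + 1) := by
        rw [mul_add, mul_one, smul_mul_assoc, mul_smul_comm, smul_smul, ← pow_succ]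
      rw [expand, smul_add, smul_smul, smul_smul]
      have hfA : f (2 * m) = (((2 * m).factorial : ℂ)⁻¹ * (Complex.I * x) ^ (2 * m)) •
          H ^ (2 * m) := by
        rw [hf]; simp only; rw [smul_pow, smul_smul]
      have hfB : f (2 * m + 1) =
          (((2 * m + 1).factorial : ℂ)⁻¹ * (Complex.I * x) ^ (2 * m + 1)) •
          H ^ (2 * m + 1) := by
        rw [hf]; simp only; rw [smul_pow, smul_smul]
      rw [hfA, hfB]
      congr 1
      · congr 1
        rw [mul_pow]
        ring
      · congr 1
        rw [ht]
        have hfac2 : ((2 * m + 1).factorial : ℂ) = (2 * (m:ℂ) + 1) * ((2 * m).factorial : ℂ) := by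
          rw [Nat.factorial_succ]; push_cast; ring
        rw [hfac2]
        push_cast
        field_simp
        ring
    exact (funext hterm : _) ▸ key
end
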